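/- Let γ̃^i_j satisfy (★) on U, let Γ^i_{jk} be the associated Christoffel symbols, and let (g_{ij}) be a symmetric matrix of holomorphic functions on U. Then the following are equivalent: (a) g is compatible with the product, i.e. Σ_l c^l_{ik} g_{lj} = Σ_l c^l_{jk} g_{li} for all i,j,k, and ∇_k g_{ij} = (1/2) Σ_l ( c^l_{ik} (dθ)_{lj} + c^l_{jk} (dθ)_{li} ) for all i,j,k; (b) g_{ij} = 0 for i ≠ j and ∂_k g_{ii} = 2 Γ^i_{ik} g_{ii} for all i,k. -/

import Mathlib

noncomputable section

variable {N : ℕ}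

/-- The partial derivative `∂_k = ∂/∂u^k` of a function of `N` complex variables. -/
def pder (k : Fin N) (f : (Fin N → ℂ) → ℂ) : (Fin N → ℂ) → ℂ :=
  fun u => fderiv ℂ f u (Pi.single k 1)

/-- Kronecker delta. -/
def kron (i j : Fin N) : ℂ := if i = j then 1 else 0

/-- The system (★) for the functions `γ̃^i_j` (`i ≠ j`) on `U`. -/
def StarSystem (U : Set (Fin N → ℂ)) (γ : Fin N → Fin N → (Fin N → ℂ) → ℂ) : Prop :=
  (∀ i j k : Fin N, i ≠ j → j ≠ k → i ≠ k → ∀ u ∈ U,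
      pder k (γ i j) u =
        -(γ i j u * γ i k u) + γ i j u * γ j k u + γ i k u * γ k j u) ∧
  (∀ i j : Fin N, i ≠ j → ∀ u ∈ U, ∑ k, pder k (γ i j) u = 0)

/-- Christoffel symbols `Γ^i_{jk}` of the flat F-manifold connection in canonical coordinates,
associated to a solution `γ̃` of (★):  `Γ^i_{jk} = 0` for pairwise distinct `i,j,k`;
`Γ^i_{ij} = Γ^i_{ji} = γ̃^i_j` and `Γ^i_{jj} = −γ̃^i_j` for `i ≠ j`;
`Γ^i_{ii} = −Σ_{k≠i} γ̃^i_k`. -/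
def Gam (γ : Fin N → Fin N → (Fin N → ℂ) → ℂ) (i j k : Fin N) : (Fin N → ℂ) → ℂ :=
  if i = j ∧ i = k then fun u => -∑ l ∈ Finset.univ.erase i, γ i l u
  else if i = j then γ i k
  else if i = k then γ i j
  else if j = k then fun u => -(γ i j u)
  else 0

/-- The counit `θ_j = Σ_i g_{ij}` of a metric `g` (in canonical coordinates, where the structure
constants are `c^i_{jk} = δ^i_j δ^i_k`). -/
def theta (g : Fin N → Fin N → (Fin N → ℂ) → ℂ) (j : Fin N) : (Fin N → ℂ) → ℂ :=
  fun u => ∑ i, g i j u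

/-- `(dθ)_{lj} = ∂_l θ_j − ∂_j θ_l`. -/
def dtheta (g : Fin N → Fin N → (Fin N → ℂ) → ℂ) (l j : Fin N) : (Fin N → ℂ) → ℂ :=
  fun u => pder l (theta g j) u - pder j (theta g l) u

/-- The covariant derivative `∇_k g_{ij}` with respect to the connection with Christoffel
symbols `Γ` associated to `γ̃`. -/
def nablaG (γ : Fin N → Fin N → (Fin N → ℂ) → ℂ) (g : Fin N → Fin N → (Fin N → ℂ) → ℂ)
    (k i j : Fin N) : (Fin N → ℂ) → ℂ :=
  fun u => pder k (g i j) u - (∑ l, Gam γ l k i u * g l j u) - ∑ l, Gam γ l k j u * g i l u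

lemma sum_kron (i k : Fin N) (f : Fin N → ℂ) :
    ∑ l, kron l i * kron l k * f l = if i = k then f i else 0 := by
  rw [Finset.sum_eq_single i (fun b _ hb => by simp [kron, hb])
    (fun h => absurd (Finset.mem_univ i) h)]
  simp only [kron, if_pos rfl]
  split_ifs <;> ring

lemma gam_swap (γ : Fin N → Fin N → (Fin N → ℂ) → ℂ) (i j k : Fin N) :
    Gam γ i j k = Gam γ i k j := by
  unfold Gam
  by_cases h1 : i = j <;> by_cases h2 : i = k <;> by_cases h3 : j = k <;> simp_all
  exact fun h => absurd h.symm h3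

lemma gam_iik {i k : Fin N} (γ : Fin N → Fin N → (Fin N → ℂ) → ℂ) (h : i ≠ k) :
    Gam γ i i k = γ i k := by
  unfold Gam; simp [h]

lemma gam_jii {i j : Fin N} (γ : Fin N → Fin N → (Fin N → ℂ) → ℂ) (h : j ≠ i) :
    Gam γ j i i = fun u => -(γ j i u) := by
  unfold Gam; simp [h]

lemma gam_zero {l k i : Fin N} (γ : Fin N → Fin N → (Fin N → ℂ) → ℂ)
    (h1 : l ≠ k) (h2 : l ≠ i) (h3 : k ≠ i) : Gam γ l k i = 0 := by
  unfold Gam; simp [h1, h2, h3]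

lemma pder_congr {U : Set (Fin N → ℂ)} (hU : IsOpen U) {f h : (Fin N → ℂ) → ℂ}
    (hfh : ∀ u ∈ U, f u = h u) {u : Fin N → ℂ} (hu : u ∈ U) (k : Fin N) :
    pder k f u = pder k h u := by
  have heq : f =ᶠ[nhds u] h := by
    filter_upwards [hU.mem_nhds hu] with v hv using hfh v hv
  unfold pder
  rw [heq.fderiv_eq]

/-- For a symmetric matrix `(g_{ij})` of holomorphic functions on a flat
F-manifold in canonical coordinates (structure constants `c^i_{jk} = δ^i_j δ^i_k`), the
compatibility with the product together with equation
`∇_k g_{ij} = ½ Σ_l ( c^l_{ik} (dθ)_{lj} + c^l_{jk} (dθ)_{li} )` is equivalent to: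
`g` is diagonal and `∂_k g_{ii} = 2 Γ^i_{ik} g_{ii}`. -/
theorem statement5 {N : ℕ} (hN : 2 ≤ N) (U : Set (Fin N → ℂ)) (hU : IsOpen U)
    (γ : Fin N → Fin N → (Fin N → ℂ) → ℂ)
    (hhol : ∀ i j : Fin N, i ≠ j → DifferentiableOn ℂ (γ i j) U)
    (hstar : StarSystem U γ)
    (g : Fin N → Fin N → (Fin N → ℂ) → ℂ)
    (hgsym : ∀ i j : Fin N, g i j = g j i)
    (hghol : ∀ i j : Fin N, DifferentiableOn ℂ (g i j) U) :
    -- (a) compatibility with the product and equation (invariant definition of the metric)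
    ((∀ i j k : Fin N, ∀ u ∈ U,
        ∑ l, kron l i * kron l k * g l j u = ∑ l, kron l j * kron l k * g l i u) ∧
     (∀ i j k : Fin N, ∀ u ∈ U,
        nablaG γ g k i j u
          = (1 / 2 : ℂ) * ∑ l, (kron l i * kron l k * dtheta g l j u
              + kron l j * kron l k * dtheta g l i u)))
    ↔
    -- (b) g is diagonal and ∂_k g_{ii} = 2 Γ^i_{ik} g_{ii}
    ((∀ i j : Fin N, i ≠ j → ∀ u ∈ U, g i j u = 0) ∧
     (∀ i k : Fin N, ∀ u ∈ U, pder k (g i i) u = 2 * Gam γ i i k u * g i i u)) := by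
  constructor
  · rintro ⟨h1, h2⟩
    have hdiag : ∀ i j : Fin N, i ≠ j → ∀ u ∈ U, g i j u = 0 := by
      intro i j hij u hu
      have h := h1 i j i u hu
      rw [sum_kron i i (fun l => g l j u), sum_kron j i (fun l => g l i u)] at h
      simpa [Ne.symm hij] using h
    refine ⟨hdiag, ?_⟩
    intro i k u hu
    have h := h2 i i k u hu
    have s1 : ∑ l, Gam γ l k i u * g l i u = Gam γ i k i u * g i i u :=
      Finset.sum_eq_single i (fun b _ hb => by rw [hdiag b i hb u hu, mul_zero]) (by simp)
    have s2 : ∑ l, Gam γ l k i u * g i l u = Gam γ i k i u * g i i u :=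
      Finset.sum_eq_single i (fun b _ hb => by rw [hdiag i b (Ne.symm hb) u hu, mul_zero])
        (by simp)
    simp only [nablaG, s1, s2, Finset.sum_add_distrib] at h
    rw [sum_kron i k (fun l => dtheta g l i u)] at h
    simp only [dtheta, sub_self, ite_self, add_zero, mul_zero] at h
    rw [gam_swap γ i k i] at h
    linear_combination h
  · rintro ⟨hdiag, hd⟩
    have hpθ : ∀ (l j : Fin N) (u : Fin N → ℂ), u ∈ U →
        pder l (theta g j) u = pder l (g j j) u := by
      intro l j u hu
      refine pder_congr hU (fun v hv => ?_) hu l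
      exact Finset.sum_eq_single j (fun b _ hb => hdiag b j hb v hv) (by simp)
    constructor
    · intro i j k u hu
      rw [sum_kron i k (fun l => g l j u), sum_kron j k (fun l => g l i u)]
      by_cases hik : i = k <;> by_cases hjk : j = k
      · rw [if_pos hik, if_pos hjk, hgsym i j]
      · have hij : i ≠ j := fun h => hjk (h ▸ hik)
        rw [if_pos hik, if_neg hjk, hdiag i j hij u hu]
      · have hij : j ≠ i := fun h => hik (h ▸ hjk)
        rw [if_neg hik, if_pos hjk, hdiag j i hij u hu]
      · rw [if_neg hik, if_neg hjk]
    · intro i j k u hu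
      have hdθ : ∀ l j : Fin N, dtheta g l j u =
          2 * Gam γ j j l u * g j j u - 2 * Gam γ l l j u * g l l u := by
        intro l j
        simp only [dtheta]
        rw [hpθ l j u hu, hpθ j l u hu, hd j l u hu, hd l j u hu]
      have s1 : ∑ l, Gam γ l k i u * g l j u = Gam γ j k i u * g j j u :=
        Finset.sum_eq_single j (fun b _ hb => by rw [hdiag b j hb u hu, mul_zero]) (by simp)
      have s2 : ∑ l, Gam γ l k j u * g i l u = Gam γ i k j u * g i i u :=
        Finset.sum_eq_single i (fun b _ hb => by rw [hdiag i b (Ne.symm hb) u hu, mul_zero])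
          (by simp)
      simp only [nablaG, s1, s2, Finset.sum_add_distrib,
        sum_kron i k (fun l => dtheta g l j u), sum_kron j k (fun l => dtheta g l i u)]
      by_cases hij : i = j
      · subst hij
        rw [hd i k u hu, gam_swap γ i k i]
        simp only [dtheta, sub_self, ite_self]
        ring
      · have hp0 : pder k (g i j) u = 0 := by
          have := pder_congr hU (h := fun _ => (0 : ℂ)) (fun v hv => hdiag i j hij v hv) hu k
          simpa [pder] using this
        rw [hp0]
        by_cases hik : i = k
        · subst hik
          have hji : j ≠ i := Ne.symm hij
          rw [if_pos rfl, if_neg hji, hdθ i j]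
          simp only [gam_jii γ hji, gam_iik γ hij, gam_iik γ hji]
          ring
        · by_cases hjk : j = k
          · subst hjk
            rw [if_neg hik, if_pos rfl, hdθ j i]
            simp only [gam_jii γ hij, gam_iik γ hij, gam_iik γ (Ne.symm hij)]
            ring
          · have hjk' : j ≠ k := hjk
            rw [if_neg hik, if_neg hjk,
              gam_zero γ hjk' (Ne.symm hij) (Ne.symm hik),
              gam_zero γ hik hij (Ne.symm hjk')]
            simp

end
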